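/- Let G be a finite group. After inverting |G| (i.e., tensoring with ℤ[1/|G|]), the mark homomorphism χ : A(G) ⊗ ℤ[1/|G|] → ∏_{[H]} ℤ[1/|G|], indexed by conjugacy classes of subgroups H ≤ G, is a ring isomorphism. -/

import Mathlib

open scoped Pointwise


-- auxiliary lemma: a fixed coset gives subconjugacy
lemma aux_subconj {G : Type*} [Group G] {K L : Subgroup G}
    (h : (MulAction.fixedPoints K (G ⧸ L)).Nonempty) :
    ∃ g : G, K ≤ MulAut.conj g • L := by
  obtain ⟨x, hx⟩ := h
  obtain ⟨g, rfl⟩ := QuotientGroup.mk_surjective x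
  refine ⟨g, fun k hk => ?_⟩
  have := hx (⟨k, hk⟩ : K)
  have h2 : ((k * g : G) : G ⧸ L) = (g : G ⧸ L) := this
  have h3 : (k * g)⁻¹ * g ∈ L := QuotientGroup.eq.mp h2
  rw [Subgroup.mem_pointwise_smul_iff_inv_smul_mem]
  simpa [mul_assoc] using L.inv_mem h3

lemma aux_card_smul {G : Type*} [Group G] (g : G) (L : Subgroup G) :
    Nat.card (MulAut.conj g • L : Subgroup G) = Nat.card L :=
  (Nat.card_congr (Subgroup.equivSMul (MulAut.conj g) L).toEquiv).symm

-- off-diagonal vanishing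
lemma aux_zero {G : Type*} [Group G] [Finite G] (R : Finset (Subgroup G))
    (hR : ∀ H : Subgroup G, ∃! K, K ∈ R ∧ ∃ g : G, K = MulAut.conj g • H)
    {K L : Subgroup G} (hK : K ∈ R) (hL : L ∈ R) (hne : K ≠ L)
    (hcard : Nat.card L ≤ Nat.card K) :
    Nat.card (MulAction.fixedPoints K (G ⧸ L)) = 0 := by
  rw [Nat.card_eq_zero]
  left
  by_contra h
  rw [not_isEmpty_iff, Set.nonempty_coe_sort] at h
  obtain ⟨g, hle⟩ := aux_subconj h
  have hcard2 : Nat.card (MulAut.conj g • L : Subgroup G) ≤ Nat.card K := by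
    rwa [aux_card_smul]
  have heq : K = MulAut.conj g • L := Subgroup.eq_of_le_of_card_ge hle hcard2
  obtain ⟨W, _, hWu⟩ := hR L
  have h1 : K = W := hWu K ⟨hK, g, heq⟩
  have h2 : L = W := hWu L ⟨hL, 1, by simp⟩
  exact hne (h1.trans h2.symm)

-- diagonal entry divides |G|
lemma aux_diag_dvd {G : Type*} [Group G] [Finite G] (L : Subgroup G) :
    Nat.card (MulAction.fixedPoints L (G ⧸ L)) ∣ Nat.card G := by
  rw [Nat.card_congr (Sylow.fixedPointsMulLeftCosetsEquivQuotient L)]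
  have h1 : Nat.card ((Subgroup.normalizer (L : Set G)) ⧸ Subgroup.comap ((Subgroup.normalizer (L : Set G)).subtype) L)
      = (Subgroup.comap ((Subgroup.normalizer (L : Set G)).subtype) L).index := rfl
  rw [h1]
  exact (Subgroup.index_dvd_card _).trans (Subgroup.card_subgroup_dvd_card _)


/-- For a finite group `G`, after inverting `|G|` the mark homomorphism
`χ : A(G) ⊗ ℤ[1/|G|] → ∏_[H] ℤ[1/|G|]` is a ring isomorphism.  Since `A(G)` is the free
`ℤ`-module on the conjugacy classes of subgroups `[H]` with basis `{G/H}`, and `χ` has matrix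
`(|(G/L)^K|)_{[K],[L]}` in these bases, this says exactly that the table of marks, indexed by a
system `R` of representatives of the conjugacy classes of subgroups, becomes invertible over
`ℤ[1/|G|]`, i.e. its determinant is a unit in `ℤ[1/|G|] = (ℤ localized away from |G|)`. -/
theorem stmt6 (G : Type*) [Group G] [Finite G] [DecidableEq (Subgroup G)]
    (R : Finset (Subgroup G))
    (hR : ∀ H : Subgroup G, ∃! K, K ∈ R ∧ ∃ g : G, K = MulAut.conj g • H) :
    IsUnit (algebraMap ℤ (Localization.Away ((Nat.card G : ℤ)))
      (Matrix.det (fun K L : R =>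
        (Nat.card (MulAction.fixedPoints ((K : Subgroup G)) (G ⧸ (L : Subgroup G))) : ℤ)))) := by
  classical
  set M : Matrix R R ℤ := fun K L : R =>
    (Nat.card (MulAction.fixedPoints ((K : Subgroup G)) (G ⧸ (L : Subgroup G))) : ℤ) with hM
  set n := Fintype.card R with hn
  set e0 : Fin n ≃ R := (Fintype.equivFin R).symm with he0
  set f : Fin n → ℕ := fun i => Nat.card ((e0 i : Subgroup G)) with hf
  set σ := Tuple.sort f with hσ
  set e : Fin n ≃ R := σ.trans e0 with he
  have hmono : Monotone (fun i => Nat.card ((e i : Subgroup G))) := Tuple.monotone_sort f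
  have hdet : M.det = ∏ i : Fin n, M (e i) (e i) := by
    rw [← Matrix.det_submatrix_equiv_self e M]
    refine Matrix.det_of_upperTriangular ?_
    intro i j hij
    show ((Nat.card (MulAction.fixedPoints ((e i : Subgroup G)) (G ⧸ ((e j : Subgroup G))))) : ℤ) = 0
    have hne : (e i : Subgroup G) ≠ (e j : Subgroup G) := by
      intro h
      exact absurd (e.injective (Subtype.ext h)) (ne_of_gt hij)
    have : Nat.card ((e j : Subgroup G)) ≤ Nat.card ((e i : Subgroup G)) :=
      hmono (le_of_lt hij)
    rw [aux_zero R hR (e i).2 (e j).2 hne this]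
    simp
  rw [hdet, map_prod]
  refine Finset.prod_induction _ IsUnit (fun a b => IsUnit.mul) isUnit_one ?_
  intro i _
  refine IsLocalization.Away.isUnit_of_dvd (S := Localization.Away ((Nat.card G : ℤ))) ((Nat.card G : ℤ)) ?_
  show ((Nat.card (MulAction.fixedPoints ((e i : Subgroup G)) (G ⧸ ((e i : Subgroup G))))) : ℤ) ∣ _
  exact_mod_cast Int.natCast_dvd_natCast.mpr (aux_diag_dvd (e i : Subgroup G))
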